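/- Let a < 1 with a ≠ 0, γ_0 > 0, and p ∈ (0,1), and define S_a(n,l) by the recursion in the context. Define p_N(n) = (p^n/n!) · exp{−γ_0 (1 − (1−p)^a)/(a p^a)} · ∑_{l=0}^{n} γ_0^l p^{−a l} S_a(n,l) for n = 0, 1, 2, …. Then p_N(n) ≥ 0 for all n and ∑_{n=0}^∞ p_N(n) = 1, i.e. p_N is a probability mass function on the nonnegative integers (the generalized negative binomial distribution gNB(γ_0, a, p)). -/

import Mathlib

open Real Finset Filter

/-- The numbers `S_a(n,l)` (generalized Stirling numbers up to the factor `a^{-l}`),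
defined by `S_a(0,0) = 1`, `S_a(n,0) = 0` for `n ≥ 1`, `S_a(n,n) = 1`, and
`S_a(n+1,l) = (n − a·l)·S_a(n,l) + S_a(n,l−1)` for `1 ≤ l ≤ n` (and `S_a(n,l) = 0`
for `l > n`). -/
noncomputable def Sgen (a : ℝ) : ℕ → ℕ → ℝ
  | 0, 0 => 1
  | 0, _ + 1 => 0
  | _ + 1, 0 => 0
  | n + 1, l + 1 => ((n : ℝ) - a * (l + 1)) * Sgen a n (l + 1) + Sgen a n l



noncomputable def bino (c : ℝ) (n : ℕ) : ℝ :=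
  (∏ i ∈ Finset.range n, ((i : ℝ) - c)) / (Nat.factorial n)

lemma bino_zero (c : ℝ) : bino c 0 = 1 := by simp [bino]

lemma bino_succ (c : ℝ) (n : ℕ) :
    ((n : ℝ) + 1) * bino c (n + 1) = ((n : ℝ) - c) * bino c n := by
  have h0 : (Nat.factorial n : ℝ) ≠ 0 := Nat.cast_ne_zero.mpr n.factorial_ne_zero
  unfold bino
  rw [Finset.prod_range_succ, Nat.factorial_succ]
  push_cast
  field_simp

noncomputable def Bb (c' : ℝ) (n : ℕ) : ℝ :=
  (∏ i ∈ Finset.range n, ((i : ℝ) + c')) / (Nat.factorial n)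

lemma Bb_pos {c' : ℝ} (hc' : 0 < c') (n : ℕ) : 0 < Bb c' n :=
  div_pos (Finset.prod_pos fun i _ => by positivity) (Nat.cast_pos.mpr n.factorial_pos)

lemma Bb_succ (c' : ℝ) (n : ℕ) :
    Bb c' (n + 1) = Bb c' n * (((n : ℝ) + c') / ((n : ℝ) + 1)) := by
  have h0 : (Nat.factorial n : ℝ) ≠ 0 := Nat.cast_ne_zero.mpr n.factorial_ne_zero
  have hn1 : ((n : ℝ) + 1) ≠ 0 := by positivity
  unfold Bb
  rw [Finset.prod_range_succ, Nat.factorial_succ]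
  push_cast
  rw [div_mul_div_comm, div_eq_div_iff (by positivity) (by positivity)]
  ring

lemma abs_bino_le (c : ℝ) (n : ℕ) : |bino c n| ≤ Bb (|c| + 1) n := by
  have h0 : (0:ℝ) < (Nat.factorial n : ℝ) := Nat.cast_pos.mpr n.factorial_pos
  have key : |∏ i ∈ Finset.range n, ((i : ℝ) - c)| ≤
      ∏ i ∈ Finset.range n, ((i : ℝ) + (|c| + 1)) := by
    rw [Finset.abs_prod]
    refine Finset.prod_le_prod (fun i _ => abs_nonneg _) (fun i _ => ?_)
    calc |(i:ℝ) - c| ≤ |(i:ℝ)| + |c| := abs_sub _ _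
      _ ≤ (i:ℝ) + (|c| + 1) := by
          rw [abs_of_nonneg (by positivity : (0:ℝ) ≤ (i:ℝ))]; linarith
  unfold bino Bb
  rw [abs_div, abs_of_pos h0]
  exact div_le_div_of_nonneg_right key h0.le

noncomputable def Vv (c' r : ℝ) (n : ℕ) : ℝ := ((n:ℝ) + 1) * Bb c' n * r ^ n

lemma Vv_pos {c' r : ℝ} (hc' : 0 < c') (hr : 0 < r) (n : ℕ) : 0 < Vv c' r n := by
  have h1 := Bb_pos hc' n
  have h2 : (0:ℝ) < r ^ n := pow_pos hr n
  unfold Vv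
  positivity

lemma Vv_summable {c' r : ℝ} (hc' : 0 < c') (hr0 : 0 < r) (hr1 : r < 1) :
    Summable (Vv c' r) := by
  apply summable_of_ratio_test_tendsto_lt_one hr1
    (Filter.Eventually.of_forall fun n => (Vv_pos hc' hr0 n).ne')
  have hratio : ∀ n : ℕ, ‖Vv c' r (n+1)‖ / ‖Vv c' r n‖ =
      (1 + 1/((n:ℝ)+1)) * (1 + (c' - 1) * (1/((n:ℝ)+1))) * r := by
    intro n
    have hn1 : ((n:ℝ) + 1) ≠ 0 := by positivity
    have hBn : Bb c' n ≠ 0 := (Bb_pos hc' n).ne'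
    have hrn : r ^ n ≠ 0 := (pow_pos hr0 n).ne'
    rw [Real.norm_eq_abs, Real.norm_eq_abs, abs_of_pos (Vv_pos hc' hr0 _),
      abs_of_pos (Vv_pos hc' hr0 _)]
    unfold Vv
    rw [Bb_succ, pow_succ]
    push_cast
    field_simp
    ring
  have h1 : Filter.Tendsto (fun n : ℕ => (1 + 1/((n:ℝ)+1)) *
      (1 + (c' - 1) * (1/((n:ℝ)+1))) * r) Filter.atTop (nhds r) := by
    have base := tendsto_one_div_add_atTop_nhds_zero_nat (𝕜 := ℝ)
    have := (((tendsto_const_nhds (x := (1:ℝ))).add base).mul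
      ((tendsto_const_nhds (x := (1:ℝ))).add (base.const_mul (c' - 1)))).mul_const r
    simpa using this
  exact Filter.Tendsto.congr (fun n => (hratio n).symm) h1

theorem hasSum_binomial (c : ℝ) {x : ℝ} (hx : |x| < 1) :
    HasSum (fun n => bino c n * x ^ n) ((1 - x) ^ c) := by
  set r : ℝ := (|x| + 1) / 2 with hrdef
  have hx0 : (0:ℝ) ≤ |x| := abs_nonneg x
  have hxr : |x| < r := by rw [hrdef]; linarith
  have hr0 : 0 < r := lt_of_le_of_lt hx0 hxr
  have hr1 : r < 1 := by rw [hrdef]; linarith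
  set c' : ℝ := |c| + 1 with hc'def
  have hc'0 : (0:ℝ) < c' := by rw [hc'def]; positivity
  have habsB : ∀ n, |bino c n| ≤ Bb c' n := fun n => abs_bino_le c n
  have hB0 : ∀ n, 0 < Bb c' n := Bb_pos hc'0
  have hVsum : Summable (Vv c' r) := Vv_summable hc'0 hr0 hr1
  set g : ℕ → ℝ → ℝ := fun n y => bino c n * y ^ n with hgdef
  set g' : ℕ → ℝ → ℝ := fun n y => bino c n * ((n:ℝ) * y ^ (n - 1)) with hg'def
  set t : Set ℝ := Set.Ioo (-r) r with htdef
  have h0t : (0:ℝ) ∈ t := ⟨neg_lt_zero.mpr hr0, hr0⟩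
  have hxt : x ∈ t := ⟨by linarith [neg_abs_le x], by linarith [le_abs_self x]⟩
  have hmem_abs : ∀ y ∈ t, |y| < r := fun y hy => abs_lt.mpr ⟨hy.1, hy.2⟩
  have hg : ∀ n : ℕ, ∀ y ∈ t, HasDerivAt (g n) (g' n y) y := fun n y _ =>
    (hasDerivAt_pow n y).const_mul (bino c n)
  set u : ℕ → ℝ := fun n => Vv c' r n / r with hudef
  have husum : Summable u := hVsum.div_const r
  have hbound : ∀ n : ℕ, ∀ y ∈ t, ‖g' n y‖ ≤ u n := by
    intro n y hy
    have hyr : |y| ≤ r := (hmem_abs y hy).le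
    have h1 : ‖g' n y‖ = |bino c n| * ((n:ℝ) * |y| ^ (n-1)) := by
      rw [hg'def]
      simp only [Real.norm_eq_abs, abs_mul, abs_pow]
      rw [abs_of_nonneg (by positivity : (0:ℝ) ≤ (n:ℝ))]
    rw [h1, hudef]
    have h2 : (n:ℝ) * |y| ^ (n-1) ≤ ((n:ℝ)+1) * r ^ n / r := by
      rcases n with _ | m
      · simp; positivity
      · have hym : |y| ^ m ≤ r ^ m := pow_le_pow_left₀ (abs_nonneg y) hyr m
        have heq : ((m:ℝ)+1+1) * r ^ (m+1) / r = ((m:ℝ)+1+1) * r ^ m := by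
          rw [pow_succ]; field_simp
        simp only [Nat.add_sub_cancel]
        push_cast
        rw [heq]
        have hrm : (0:ℝ) ≤ r ^ m := (pow_pos hr0 m).le
        nlinarith [pow_nonneg (abs_nonneg y) m]
    have hVval : u n = Bb c' n * (((n:ℝ)+1) * r ^ n / r) := by
      rw [hudef]; unfold Vv; ring
    change _ ≤ u n
    rw [hVval]
    exact mul_le_mul (habsB n) h2 (by positivity) (hB0 n).le
  have hsum0 : Summable (fun n => g n 0) := by
    apply summable_of_ne_finset_zero (s := {0})
    intro b hb
    simp only [Finset.mem_singleton] at hb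
    rw [hgdef]
    simp [zero_pow hb]
  set G : ℝ → ℝ := fun z => ∑' n, g n z with hGdef
  have hkey : ∀ y ∈ t, HasDerivAt G (∑' n, g' n y) y := fun y hy =>
    hasDerivAt_tsum_of_isPreconnected husum isOpen_Ioo (convex_Ioo _ _).isPreconnected
      hg hbound h0t hsum0 hy
  have hg'sum : ∀ y ∈ t, Summable (fun n => g' n y) := fun y hy =>
    Summable.of_norm_bounded husum (fun n => hbound n y hy)
  have hgsum : ∀ y ∈ t, Summable (fun n => g n y) := by
    intro y hy
    apply Summable.of_norm_bounded hVsum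
    intro n
    have hyr : |y| ≤ r := (hmem_abs y hy).le
    have hyn : |y| ^ n ≤ r ^ n := pow_le_pow_left₀ (abs_nonneg y) hyr n
    rw [hgdef]
    simp only [Real.norm_eq_abs, abs_mul, abs_pow]
    have h1 : |bino c n| * |y| ^ n ≤ Bb c' n * r ^ n :=
      mul_le_mul (habsB n) hyn (by positivity) (hB0 n).le
    have h2 : Bb c' n * r ^ n ≤ ((n:ℝ)+1) * Bb c' n * r ^ n := by
      have hp : (0:ℝ) < Bb c' n * r ^ n := mul_pos (hB0 n) (pow_pos hr0 n)
      nlinarith [Nat.cast_nonneg (α := ℝ) n]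
    unfold Vv
    linarith
  have hngsum : ∀ y ∈ t, Summable (fun n : ℕ => (n:ℝ) * (bino c n * y ^ n)) := by
    intro y hy
    apply Summable.of_norm_bounded hVsum
    intro n
    have hyr : |y| ≤ r := (hmem_abs y hy).le
    have hyn : |y| ^ n ≤ r ^ n := pow_le_pow_left₀ (abs_nonneg y) hyr n
    simp only [Real.norm_eq_abs, abs_mul, abs_pow]
    rw [abs_of_nonneg (by positivity : (0:ℝ) ≤ (n:ℝ))]
    have h1 : |bino c n| * |y| ^ n ≤ Bb c' n * r ^ n :=
      mul_le_mul (habsB n) hyn (by positivity) (hB0 n).le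
    have h2 : (n:ℝ) * (|bino c n| * |y| ^ n) ≤ (n:ℝ) * (Bb c' n * r ^ n) :=
      mul_le_mul_of_nonneg_left h1 (Nat.cast_nonneg n)
    have h3 : (n:ℝ) * (Bb c' n * r ^ n) ≤ ((n:ℝ)+1) * Bb c' n * r ^ n := by
      have hp : (0:ℝ) < Bb c' n * r ^ n := mul_pos (hB0 n) (pow_pos hr0 n)
      nlinarith
    unfold Vv
    linarith
  have hODE : ∀ y ∈ t, (1 - y) * (∑' n, g' n y) = -c * G y := by
    intro y hy
    have hD := Summable.tsum_eq_zero_add (hg'sum y hy)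
    have hzero : g' 0 y = 0 := by rw [hg'def]; simp
    have hterm : ∀ n : ℕ, g' (n+1) y =
        (n:ℝ) * (bino c n * y ^ n) - c * (bino c n * y ^ n) := by
      intro n
      have hb := bino_succ c n
      rw [hg'def]
      simp only [Nat.add_sub_cancel]
      push_cast
      calc bino c (n+1) * (((n:ℝ)+1) * y ^ n)
          = (((n:ℝ)+1) * bino c (n+1)) * y ^ n := by ring
        _ = (((n:ℝ) - c) * bino c n) * y ^ n := by rw [hb]
        _ = (n:ℝ) * (bino c n * y ^ n) - c * (bino c n * y ^ n) := by ring
    rw [hzero, zero_add] at hD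
    have hsplit : ∑' n, g' (n+1) y =
        (∑' n : ℕ, (n:ℝ) * (bino c n * y ^ n)) - c * ∑' n, (bino c n * y ^ n) := by
      rw [tsum_congr hterm,
        Summable.tsum_sub (hngsum y hy) ((hgsum y hy).mul_left c),
        Summable.tsum_mul_left c (hgsum y hy)]
    have hshift : ∑' n : ℕ, (n:ℝ) * (bino c n * y ^ n) = y * ∑' n, g' n y := by
      rw [← Summable.tsum_mul_left y (hg'sum y hy)]
      apply tsum_congr
      intro n
      rcases n with _ | m
      · simp [hg'def]
      · rw [hg'def]
        simp only [Nat.add_sub_cancel]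
        push_cast
        rw [pow_succ]
        ring
    have hfin : ∑' n, g' n y = y * (∑' n, g' n y) - c * G y := by
      conv_lhs => rw [hD, hsplit, hshift]
    linarith
  set F : ℝ → ℝ := fun y => G y * (1 - y) ^ (-c) with hFdef
  have hF : ∀ y ∈ t, HasDerivAt F 0 y := by
    intro y hy
    have hyr : y < r := hy.2
    have h1y : (0:ℝ) < 1 - y := by linarith
    have hinner : HasDerivAt (fun z : ℝ => 1 - z) (-1) y := by
      simpa using (hasDerivAt_id y).const_sub 1
    have houter : HasDerivAt (fun z : ℝ => z ^ (-c)) (-c * (1 - y) ^ (-c - 1)) (1 - y) :=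
      Real.hasDerivAt_rpow_const (Or.inl h1y.ne')
    have hpow : HasDerivAt (fun z : ℝ => (1 - z) ^ (-c))
        ((-c * (1 - y) ^ (-c - 1)) * (-1)) y := houter.comp y hinner
    have hmul := (hkey y hy).mul hpow
    have hzero : (∑' n, g' n y) * (1 - y) ^ (-c) +
        G y * ((-c * (1 - y) ^ (-c - 1)) * (-1)) = 0 := by
      have hpow1 : (1 - y) ^ (-c) = (1 - y) ^ (-c - 1) * (1 - y) := by
        rw [← Real.rpow_add_one h1y.ne' (-c - 1)]
        congr 1
        ring
      rw [hpow1]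
      have hode := hODE y hy
      linear_combination ((1 - y) ^ (-c - 1)) * hode
    rw [hzero] at hmul
    exact hmul
  have hconst : F x = F 0 := by
    have hle := Convex.norm_image_sub_le_of_norm_hasDerivWithin_le
      (f := F) (f' := fun _ => (0:ℝ)) (C := 0) (s := t)
      (fun y hy => (hF y hy).hasDerivWithinAt)
      (fun y _ => by simp) (convex_Ioo _ _) h0t hxt
    simp only [zero_mul, norm_le_zero_iff, sub_eq_zero] at hle
    exact hle
  have hF0 : F 0 = 1 := by
    have hts : ∑' n, g n 0 = g 0 0 := by
      apply tsum_eq_single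
      intro b hb
      rw [hgdef]; simp [zero_pow hb]
    have hG0 : G 0 = 1 := by
      calc G 0 = ∑' n, g n 0 := rfl
        _ = g 0 0 := hts
        _ = 1 := by simp [hgdef, bino_zero]
    calc F 0 = G 0 * (1 - (0:ℝ)) ^ (-c) := rfl
      _ = 1 := by rw [hG0]; simp
  have h1x : (0:ℝ) < 1 - x := by
    have := hxt.2
    have := le_abs_self x
    linarith
  have hGx : G x = (1 - x) ^ c := by
    have h := hconst.trans hF0
    rw [hFdef] at h
    simp only at h
    rw [Real.rpow_neg h1x.le] at h
    have hpos : (0:ℝ) < (1 - x) ^ c := Real.rpow_pos_of_pos h1x c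
    field_simp at h
    linarith
  have hval : ∑' n, bino c n * x ^ n = (1 - x) ^ c := hGx
  exact (Summable.hasSum_iff (hgsum x hxt)).mpr hval


lemma Sgen_eq_zero (a : ℝ) : ∀ n l : ℕ, n < l → Sgen a n l = 0 := by
  intro n
  induction n with
  | zero => intro l hl
            match l, hl with
            | l + 1, _ => rfl
  | succ m ih =>
      intro l hl
      match l, hl with
      | l + 1, hl =>
        show ((m : ℝ) - a * (l + 1)) * Sgen a m (l + 1) + Sgen a m l = 0
        rw [ih (l+1) (by omega), ih l (by omega)]
        ring

lemma Sgen_nonneg {a : ℝ} (ha : a ≤ 1) : ∀ n l : ℕ, 0 ≤ Sgen a n l := by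
  intro n
  induction n with
  | zero => intro l
            match l with
            | 0 => norm_num [Sgen]
            | l + 1 => norm_num [Sgen]
  | succ m ih =>
      intro l
      match l with
      | 0 => norm_num [Sgen]
      | l + 1 =>
        show 0 ≤ ((m : ℝ) - a * (l + 1)) * Sgen a m (l + 1) + Sgen a m l
        rcases le_or_gt (l + 1) m with hle | hlt
        · have h1 : a * ((l: ℝ) + 1) ≤ (l : ℝ) + 1 := by
            have : (0:ℝ) ≤ (l:ℝ) + 1 := by positivity
            nlinarith
          have h2 : ((l:ℝ) + 1) ≤ (m:ℝ) := by exact_mod_cast hle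
          have h3 : (0:ℝ) ≤ (m : ℝ) - a * (l + 1) := by linarith
          have := ih (l+1)
          have := ih l
          positivity
        · rw [Sgen_eq_zero a m (l+1) hlt]
          have := ih l
          simpa using this

lemma Sgen_closed (a : ℝ) : ∀ n l : ℕ,
    a ^ l * (Nat.factorial l : ℝ) * Sgen a n l =
      ∑ j ∈ Finset.range (l + 1), (-1 : ℝ) ^ j * (Nat.choose l j : ℝ) *
        ∏ i ∈ Finset.range n, ((i : ℝ) - a * j) := by
  intro n
  induction n with
  | zero =>
      intro l
      match l with
      | 0 => simp [Sgen]
      | l + 1 =>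
        have h0 : Sgen a 0 (l+1) = 0 := rfl
        rw [h0]
        simp only [Finset.prod_range_zero, mul_one, mul_zero]
        have h := Int.alternating_sum_range_choose (n := l + 1)
        rw [if_neg (Nat.succ_ne_zero l)] at h
        have h2 := congrArg (fun z : ℤ => (z : ℝ)) h
        push_cast at h2
        exact h2.symm
  | succ n ihn =>
      intro l
      match l with
      | 0 =>
        have h0 : Sgen a (n+1) 0 = 0 := rfl
        rw [h0]
        rw [Finset.sum_range_one]
        have : (0 : ℕ) ∈ Finset.range (n+1) := by simp
        rw [Finset.prod_eq_zero this (by simp)]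
        ring
      | l + 1 =>
        have h1 := ihn (l+1)
        have h2 := ihn l
        have hrec : Sgen a (n+1) (l+1) =
            ((n : ℝ) - a * ((l:ℝ) + 1)) * Sgen a n (l + 1) + Sgen a n l := by
          show Sgen a (n+1) (l+1) = _
          rfl
        rw [hrec]
        have hLHS : a ^ (l+1) * ((Nat.factorial (l+1) : ℕ) : ℝ) *
            (((n:ℝ) - a * ((l:ℝ)+1)) * Sgen a n (l+1) + Sgen a n l)
            = ((n:ℝ) - a * ((l:ℝ)+1)) *
                (a ^ (l+1) * ((Nat.factorial (l+1) : ℕ) : ℝ) * Sgen a n (l+1))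
              + (a * ((l:ℝ)+1)) * (a ^ l * ((Nat.factorial l : ℕ) : ℝ) * Sgen a n l) := by
          rw [Nat.factorial_succ]
          push_cast
          ring
        rw [hLHS, h1, h2]
        have hsplit : ∀ j : ℕ, ∏ i ∈ Finset.range (n+1), ((i:ℝ) - a * j)
            = (∏ i ∈ Finset.range n, ((i:ℝ) - a * j)) * ((n:ℝ) - a * j) := fun j =>
          Finset.prod_range_succ _ _
        simp only [hsplit]
        have hR2 : ∑ j ∈ Finset.range (l+1), (-1:ℝ)^j * (Nat.choose l j : ℝ) *
              ∏ i ∈ Finset.range n, ((i:ℝ) - a * j)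
            = ∑ j ∈ Finset.range (l+2), (-1:ℝ)^j * (Nat.choose l j : ℝ) *
              ∏ i ∈ Finset.range n, ((i:ℝ) - a * j) := by
          rw [Finset.sum_range_succ (n := l+1)]
          simp [Nat.choose_succ_self]
        rw [hR2, Finset.mul_sum, Finset.mul_sum, ← Finset.sum_add_distrib]
        apply Finset.sum_congr rfl
        intro j hj
        have hj' : j ≤ l + 1 := by
          simpa [Nat.lt_succ_iff] using Finset.mem_range.mp hj
        have hcast : ((l + 1 - j : ℕ) : ℝ) = ((l:ℝ) + 1) - (j:ℝ) := by
          push_cast [Nat.cast_sub hj']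
          ring
        have hch : ((Nat.choose l j : ℕ) : ℝ) * ((l:ℝ)+1)
            = ((Nat.choose (l+1) j : ℕ) : ℝ) * (((l:ℝ)+1) - (j:ℝ)) := by
          have h := Nat.choose_mul_succ_eq l j
          have h3 := congrArg (fun m : ℕ => (m : ℝ)) h
          push_cast at h3
          rw [← hcast]
          linarith [h3]
        linear_combination ((-1:ℝ)^j * (∏ i ∈ Finset.range n, ((i:ℝ) - a * j)) * a) * hch

lemma hasSum_row {a p : ℝ} (ha0 : a ≠ 0) (hp : 0 < p) (hp1 : p < 1) (l : ℕ) :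
    HasSum (fun n => Sgen a n l * p ^ n / (Nat.factorial n : ℝ))
      (((1 - (1 - p) ^ a) / a) ^ l / (Nat.factorial l : ℝ)) := by
  have hpx : |p| < 1 := abs_lt.mpr ⟨by linarith, hp1⟩
  have h1p : (0:ℝ) ≤ 1 - p := by linarith
  have hal : a ^ l * (Nat.factorial l : ℝ) ≠ 0 :=
    mul_ne_zero (pow_ne_zero l ha0) (Nat.cast_ne_zero.mpr l.factorial_ne_zero)
  have hpoint : ∀ n : ℕ, (a ^ l * (Nat.factorial l : ℝ))⁻¹ *
      ∑ j ∈ Finset.range (l+1), (-1:ℝ)^j * (Nat.choose l j : ℝ) *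
        (bino (a * (j:ℝ)) n * p ^ n)
      = Sgen a n l * p ^ n / (Nat.factorial n : ℝ) := by
    intro n
    have hfac : (Nat.factorial n : ℝ) ≠ 0 := Nat.cast_ne_zero.mpr n.factorial_ne_zero
    have hc := Sgen_closed a n l
    have hstep : ∑ j ∈ Finset.range (l+1), (-1:ℝ)^j * (Nat.choose l j : ℝ) *
        (bino (a * (j:ℝ)) n * p ^ n)
        = (∑ j ∈ Finset.range (l+1), (-1:ℝ)^j * (Nat.choose l j : ℝ) *
            ∏ i ∈ Finset.range n, ((i:ℝ) - a * j)) * p ^ n / (Nat.factorial n : ℝ) := by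
      rw [Finset.sum_mul, Finset.sum_div]
      apply Finset.sum_congr rfl
      intro j _
      unfold bino
      ring
    rw [hstep, ← hc]
    field_simp
  have hterm : ∀ j ∈ Finset.range (l+1),
      HasSum (fun n => (-1:ℝ)^j * (Nat.choose l j : ℝ) * (bino (a * (j:ℝ)) n * p ^ n))
        ((-1:ℝ)^j * (Nat.choose l j : ℝ) * (1 - p) ^ (a * (j:ℝ))) := fun j _ =>
    (hasSum_binomial (a * (j:ℝ)) hpx).mul_left _
  have H := (hasSum_sum hterm).mul_left (a ^ l * (Nat.factorial l : ℝ))⁻¹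
  have hfun : (fun n => (a ^ l * (Nat.factorial l : ℝ))⁻¹ *
      ∑ j ∈ Finset.range (l+1), (-1:ℝ)^j * (Nat.choose l j : ℝ) *
        (bino (a * (j:ℝ)) n * p ^ n))
      = fun n => Sgen a n l * p ^ n / (Nat.factorial n : ℝ) := funext hpoint
  rw [hfun] at H
  have hq : ∀ j : ℕ, (1 - p) ^ (a * (j:ℝ)) = ((1 - p) ^ a) ^ j := by
    intro j
    rw [Real.rpow_mul h1p, Real.rpow_natCast]
  have hbinom : ∑ j ∈ Finset.range (l+1), (-1:ℝ)^j * (Nat.choose l j : ℝ) *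
      ((1 - p) ^ a) ^ j = (1 - (1 - p) ^ a) ^ l := by
    rw [show (1:ℝ) - (1 - p) ^ a = -((1 - p) ^ a) + 1 by ring, add_pow]
    apply Finset.sum_congr rfl
    intro j _
    rw [neg_pow]
    ring
  have hval : (a ^ l * (Nat.factorial l : ℝ))⁻¹ *
      ∑ j ∈ Finset.range (l+1), (-1:ℝ)^j * (Nat.choose l j : ℝ) * (1 - p) ^ (a * (j:ℝ))
      = ((1 - (1 - p) ^ a) / a) ^ l / (Nat.factorial l : ℝ) := by
    have : ∑ j ∈ Finset.range (l+1), (-1:ℝ)^j * (Nat.choose l j : ℝ) *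
        (1 - p) ^ (a * (j:ℝ)) = (1 - (1 - p) ^ a) ^ l := by
      rw [← hbinom]
      exact Finset.sum_congr rfl fun j _ => by rw [hq j]
    rw [this, div_pow]
    field_simp
  rw [hval] at H
  exact H

noncomputable def gnbF (a γ₀ p : ℝ) (l n : ℕ) : ℝ :=
  γ₀ ^ l * p ^ (-(a * (l:ℝ))) * (Sgen a n l * p ^ n / (Nat.factorial n : ℝ))

/-- **Equation (3.1)**: the generalized negative binomial distribution `gNB(γ₀, a, p)`,
`p_N(n) = (p^n/n!) e^{−γ₀(1−(1−p)^a)/(a p^a)} ∑_{l=0}^n γ₀^l p^{−al} S_a(n,l)`,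
is a probability mass function on the nonnegative integers. -/

theorem gNB_is_pmf (a γ₀ p : ℝ) (ha : a < 1) (ha0 : a ≠ 0)
    (hγ : 0 < γ₀) (hp : p ∈ Set.Ioo (0 : ℝ) 1)
    (pN : ℕ → ℝ)
    (hpN : ∀ n : ℕ, pN n =
      p ^ n / (Nat.factorial n : ℝ) *
        Real.exp (-(γ₀ * (1 - (1 - p) ^ a) / (a * p ^ a))) *
        ∑ l ∈ Finset.range (n + 1), γ₀ ^ l * p ^ (-(a * l)) * Sgen a n l) :
    (∀ n : ℕ, 0 ≤ pN n) ∧ (∑' n : ℕ, pN n = 1) := by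
  obtain ⟨hp0, hp1⟩ := hp
  set E : ℝ := Real.exp (-(γ₀ * (1 - (1 - p) ^ a) / (a * p ^ a))) with hEdef
  have hE0 : 0 < E := Real.exp_pos _
  have hSnn : ∀ n l : ℕ, 0 ≤ Sgen a n l := Sgen_nonneg ha.le
  have htermnn : ∀ n l : ℕ, 0 ≤ γ₀ ^ l * p ^ (-(a * (l:ℝ))) * Sgen a n l := by
    intro n l
    have h1 : (0:ℝ) ≤ γ₀ ^ l := pow_nonneg hγ.le l
    have h2 : (0:ℝ) ≤ p ^ (-(a * (l:ℝ))) := Real.rpow_nonneg hp0.le _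
    have h3 := hSnn n l
    positivity
  have hnonneg : ∀ n : ℕ, 0 ≤ pN n := by
    intro n
    rw [hpN n]
    apply mul_nonneg (mul_nonneg (by positivity) hE0.le)
    exact Finset.sum_nonneg fun l _ => htermnn n l
  refine ⟨hnonneg, ?_⟩
  set φ : ℝ := (1 - (1 - p) ^ a) / a with hφdef
  set θ : ℝ := γ₀ * p ^ (-a) * φ with hθdef
  have hrow : ∀ l : ℕ, HasSum (gnbF a γ₀ p l)
      (γ₀ ^ l * p ^ (-(a * (l:ℝ))) * (φ ^ l / (Nat.factorial l : ℝ))) := fun l =>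
    (hasSum_row ha0 hp0 hp1 l).mul_left _
  have hrowval : ∀ l : ℕ, γ₀ ^ l * p ^ (-(a * (l:ℝ))) * (φ ^ l / (Nat.factorial l : ℝ))
      = θ ^ l / (Nat.factorial l : ℝ) := by
    intro l
    have h1 : p ^ (-(a * (l:ℝ))) = (p ^ (-a)) ^ l := by
      rw [show -(a * (l:ℝ)) = (-a) * (l:ℝ) by ring, Real.rpow_mul hp0.le,
        Real.rpow_natCast]
    rw [h1, hθdef, mul_pow, mul_pow]
    ring
  have hθsum : HasSum (fun l : ℕ => θ ^ l / (Nat.factorial l : ℝ)) (Real.exp θ) := by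
    rw [Real.exp_eq_exp_ℝ]
    exact NormedSpace.expSeries_div_hasSum_exp θ
  have hrowtsum : (fun l : ℕ => ∑' n, gnbF a γ₀ p l n)
      = fun l : ℕ => θ ^ l / (Nat.factorial l : ℝ) := by
    funext l
    rw [(hrow l).tsum_eq, hrowval l]
  have hfnn : ∀ q : ℕ × ℕ, 0 ≤ gnbF a γ₀ p q.1 q.2 := by
    intro q
    have h1 : (0:ℝ) ≤ γ₀ ^ q.1 := pow_nonneg hγ.le _
    have h2 : (0:ℝ) ≤ p ^ (-(a * (q.1:ℝ))) := Real.rpow_nonneg hp0.le _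
    have h3 := hSnn q.2 q.1
    have h4 : (0:ℝ) ≤ p ^ q.2 := pow_nonneg hp0.le _
    have h5 : (0:ℝ) < (Nat.factorial q.2 : ℝ) := Nat.cast_pos.mpr q.2.factorial_pos
    unfold gnbF
    positivity
  have hprod : Summable (fun q : ℕ × ℕ => gnbF a γ₀ p q.1 q.2) := by
    rw [summable_prod_of_nonneg hfnn]
    refine ⟨fun l => (hrow l).summable, ?_⟩
    simp only
    rw [hrowtsum]
    exact hθsum.summable
  have hcol : ∀ n : ℕ, Summable (fun l => gnbF a γ₀ p l n) := by
    intro n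
    apply summable_of_ne_finset_zero (s := Finset.range (n+1))
    intro l hl
    have hnl : n < l := by
      rcases Nat.lt_or_ge n l with h | h
      · exact h
      · exact absurd (Finset.mem_range.mpr (by omega)) hl
    unfold gnbF
    rw [Sgen_eq_zero a n l hnl]
    ring
  have hcomm : ∑' (n : ℕ) (l : ℕ), gnbF a γ₀ p l n
      = ∑' (l : ℕ) (n : ℕ), gnbF a γ₀ p l n :=
    Summable.tsum_comm' hprod (fun l => (hrow l).summable) hcol
  have hcoleq : ∀ n : ℕ, ∑' l, gnbF a γ₀ p l n
      = ∑ l ∈ Finset.range (n+1), gnbF a γ₀ p l n := by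
    intro n
    apply tsum_eq_sum
    intro l hl
    have hnl : n < l := by
      by_contra h
      exact hl (Finset.mem_range.mpr (by omega))
    unfold gnbF
    rw [Sgen_eq_zero a n l hnl]
    ring
  have hpN' : ∀ n : ℕ, pN n = E * ∑ l ∈ Finset.range (n+1), gnbF a γ₀ p l n := by
    intro n
    rw [hpN n, Finset.mul_sum, Finset.mul_sum]
    apply Finset.sum_congr rfl
    intro l _
    unfold gnbF
    ring
  have hpa : (0:ℝ) < p ^ a := Real.rpow_pos_of_pos hp0 a
  have hEθ : E * Real.exp θ = 1 := by
    rw [hEdef, ← Real.exp_add]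
    have hz : -(γ₀ * (1 - (1 - p) ^ a) / (a * p ^ a)) + θ = 0 := by
      rw [hθdef, hφdef, Real.rpow_neg hp0.le]
      field_simp
      ring
    rw [hz, Real.exp_zero]
  calc ∑' n, pN n = ∑' n, E * ∑ l ∈ Finset.range (n+1), gnbF a γ₀ p l n :=
        tsum_congr hpN'
    _ = E * ∑' n, ∑ l ∈ Finset.range (n+1), gnbF a γ₀ p l n := tsum_mul_left
    _ = E * ∑' (n : ℕ) (l : ℕ), gnbF a γ₀ p l n := by
        congr 1
        exact (tsum_congr hcoleq).symm
    _ = E * ∑' (l : ℕ) (n : ℕ), gnbF a γ₀ p l n := by rw [hcomm]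
    _ = E * Real.exp θ := by rw [tsum_congr (fun l => congrFun hrowtsum l), hθsum.tsum_eq]
    _ = 1 := hEθ
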